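/- Let λ ∈ ℂ with Re(λ) < 0, let β ∈ (-1,1), ε > 0, and h > 0. Both roots of the quadratic μ² - (β + 1 + (h(1-β)/√ε)λ)μ + β = 0 lie in the open unit disk if and only if h < 2√ε(1-β²)|Re(λ)| / ((1+β²)|λ|² + 2β(Im(λ)² - Re(λ)²)). -/

import Mathlib

lemma schur_cohn (b : ℂ) (β : ℝ) (hβ : |β| < 1) :
    (∀ μ : ℂ, μ ^ 2 - b * μ + (β : ℂ) = 0 → ‖μ‖ < 1) ↔
      ‖b - (β : ℂ) * (starRingEnd ℂ) b‖ < 1 - β ^ 2 := by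
  have key : ∀ u v : ℂ, b = u + v → u * v = (β : ℂ) →
      b - (β : ℂ) * (starRingEnd ℂ) b
        = v * (1 - ((‖u‖ ^ 2 : ℝ) : ℂ)) + u * (1 - ((‖v‖ ^ 2 : ℝ) : ℂ)) := by
    intro u v hb hp
    have hu : ((‖u‖ ^ 2 : ℝ) : ℂ) = u * (starRingEnd ℂ) u := by
      rw [Complex.mul_conj, Complex.sq_norm]
    have hv : ((‖v‖ ^ 2 : ℝ) : ℂ) = v * (starRingEnd ℂ) v := by
      rw [Complex.mul_conj, Complex.sq_norm]
    subst hb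
    rw [hu, hv, map_add]
    linear_combination ((starRingEnd ℂ) u + (starRingEnd ℂ) v) * hp
  constructor
  · intro H
    obtain ⟨s, hs⟩ := IsAlgClosed.exists_pow_nat_eq (b ^ 2 - 4 * (β : ℂ)) (n := 2) (by norm_num)
    set u := (b + s) / 2 with hu
    set v := (b - s) / 2 with hv
    have hru : u ^ 2 - b * u + (β : ℂ) = 0 := by rw [hu]; ring_nf; linear_combination hs / 4
    have hrv : v ^ 2 - b * v + (β : ℂ) = 0 := by rw [hv]; ring_nf; linear_combination hs / 4
    have hau := H u hru
    have hav := H v hrv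
    have hb : b = u + v := by rw [hu, hv]; ring
    have hp : u * v = (β : ℂ) := by rw [hu, hv]; linear_combination -hs / 4
    rw [key u v hb hp]
    have hst : ‖u‖ * ‖v‖ = |β| := by
      rw [← norm_mul, hp, Complex.norm_real, Real.norm_eq_abs]
    have h1 : ‖v * (1 - ((‖u‖ ^ 2 : ℝ) : ℂ)) + u * (1 - ((‖v‖ ^ 2 : ℝ) : ℂ))‖
        ≤ ‖v‖ * (1 - ‖u‖ ^ 2) + ‖u‖ * (1 - ‖v‖ ^ 2) := by
      refine le_trans (norm_add_le _ _) ?_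
      rw [norm_mul, norm_mul]
      have e1 : (1 : ℂ) - ((‖u‖ ^ 2 : ℝ) : ℂ) = ((1 - ‖u‖ ^ 2 : ℝ) : ℂ) := by push_cast; ring
      have e2 : (1 : ℂ) - ((‖v‖ ^ 2 : ℝ) : ℂ) = ((1 - ‖v‖ ^ 2 : ℝ) : ℂ) := by push_cast; ring
      rw [e1, e2, Complex.norm_real, Complex.norm_real, Real.norm_eq_abs, Real.norm_eq_abs,
        _root_.abs_of_nonneg (by nlinarith [norm_nonneg u] : (0:ℝ) ≤ 1 - ‖u‖ ^ 2),
        _root_.abs_of_nonneg (by nlinarith [norm_nonneg v] : (0:ℝ) ≤ 1 - ‖v‖ ^ 2)]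
    have h2 : β ^ 2 = (‖u‖ * ‖v‖) ^ 2 := by
      rw [hst, _root_.sq_abs]
    refine lt_of_le_of_lt h1 ?_
    nlinarith [norm_nonneg u, norm_nonneg v,
      mul_pos (mul_pos (by linarith : (0:ℝ) < 1 - ‖u‖)
        (by linarith : (0:ℝ) < 1 - ‖v‖))
        (by nlinarith [norm_nonneg u, norm_nonneg v] : (0:ℝ) < 1 - ‖u‖ * ‖v‖)]
  · intro hcond μ hroot
    by_contra hge
    push_neg at hge
    set ν := b - μ with hν
    have hp : μ * ν = (β : ℂ) := by rw [hν]; linear_combination -hroot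
    have hb : b = μ + ν := by rw [hν]; ring
    have hst : ‖μ‖ * ‖ν‖ = |β| := by
      rw [← norm_mul, hp, Complex.norm_real, Real.norm_eq_abs]
    set s := ‖μ‖ with hsdef
    set t := ‖ν‖ with htdef
    have hs1 : 1 ≤ s := hge
    have ht1 : t < 1 := by nlinarith [norm_nonneg ν]
    have key2 := key μ ν hb hp
    rw [key2] at hcond
    have e1 : ‖μ * (1 - ((t ^ 2 : ℝ) : ℂ))‖ = s * (1 - t ^ 2) := by
      rw [norm_mul]
      have e : (1 : ℂ) - ((t ^ 2 : ℝ) : ℂ) = ((1 - t ^ 2 : ℝ) : ℂ) := by push_cast; ring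
      rw [e, Complex.norm_real, Real.norm_eq_abs, _root_.abs_of_nonneg (by nlinarith [norm_nonneg ν])]
    have e2 : ‖- (ν * (1 - ((s ^ 2 : ℝ) : ℂ)))‖ = t * (s ^ 2 - 1) := by
      rw [norm_neg, norm_mul]
      have e : (1 : ℂ) - ((s ^ 2 : ℝ) : ℂ) = ((1 - s ^ 2 : ℝ) : ℂ) := by push_cast; ring
      rw [e, Complex.norm_real, Real.norm_eq_abs, _root_.abs_of_nonpos (by nlinarith)]
      ring
    have hlow : s * (1 - t ^ 2) - t * (s ^ 2 - 1)
        ≤ ‖ν * (1 - ((s ^ 2 : ℝ) : ℂ)) + μ * (1 - ((t ^ 2 : ℝ) : ℂ))‖ := by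
      have tri := norm_add_le (ν * (1 - ((s ^ 2 : ℝ) : ℂ)) + μ * (1 - ((t ^ 2 : ℝ) : ℂ)))
        (- (ν * (1 - ((s ^ 2 : ℝ) : ℂ))))
      have ecancel : ν * (1 - ((s ^ 2 : ℝ) : ℂ)) + μ * (1 - ((t ^ 2 : ℝ) : ℂ))
          + - (ν * (1 - ((s ^ 2 : ℝ) : ℂ))) = μ * (1 - ((t ^ 2 : ℝ) : ℂ)) := by ring
      rw [ecancel, e2, e1] at tri
      linarith
    have hb2 : β ^ 2 = (s * t) ^ 2 := by
      have h' := _root_.sq_abs β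
      rw [← hst] at h'
      exact h'.symm
    nlinarith [norm_nonneg ν,
      mul_nonneg (mul_nonneg (by linarith : (0:ℝ) ≤ s - 1) (by linarith : (0:ℝ) ≤ 1 - t))
        (by nlinarith : (0:ℝ) ≤ 1 - s * t)]

set_option maxHeartbeats 1600000 in
theorem stmt5 (lam : ℂ) (hre : lam.re < 0) (β ε h : ℝ)
    (hβ : β ∈ Set.Ioo (-1 : ℝ) 1) (hε : 0 < ε) (hh : 0 < h) :
    (∀ μ : ℂ,
        μ ^ 2 - ((β : ℂ) + 1 + ((h * (1 - β) / Real.sqrt ε : ℝ) : ℂ) * lam) * μ + (β : ℂ) = 0 →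
        ‖μ‖ < 1) ↔
      h < 2 * Real.sqrt ε * (1 - β ^ 2) * |lam.re| /
          ((1 + β ^ 2) * ‖lam‖ ^ 2 + 2 * β * (lam.im ^ 2 - lam.re ^ 2)) := by
  obtain ⟨hβ1, hβ2⟩ := hβ
  have hβ' : |β| < 1 := abs_lt.mpr ⟨hβ1, hβ2⟩
  have h1β : (0:ℝ) < 1 - β := by linarith
  set r := Real.sqrt ε with hrdef
  have hr : 0 < r := Real.sqrt_pos.mpr hε
  set x := lam.re
  set y := lam.im
  set c : ℝ := h * (1 - β) / r with hcdef
  have hc : 0 < c := by positivity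
  have hcr : c * r = h * (1 - β) := by rw [hcdef, div_mul_cancel₀ _ hr.ne']
  set b : ℂ := (β : ℂ) + 1 + (c : ℂ) * lam with hbdef
  rw [schur_cohn b β hβ']
  set D : ℝ := 1 - β ^ 2 with hDdef
  have hD : 0 < D := by nlinarith [mul_pos h1β (by linarith : (0:ℝ) < 1 + β)]
  have hzre : (b - (β : ℂ) * (starRingEnd ℂ) b).re = D + c * (1 - β) * x := by
    simp [hbdef, Complex.sub_re, Complex.add_re, Complex.mul_re, Complex.conj_re,
      Complex.conj_im, Complex.ofReal_re, Complex.ofReal_im, hDdef]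
    ring
  have hzim : (b - (β : ℂ) * (starRingEnd ℂ) b).im = c * (1 + β) * y := by
    simp [hbdef, Complex.sub_im, Complex.add_im, Complex.mul_im, Complex.conj_re,
      Complex.conj_im, Complex.ofReal_re, Complex.ofReal_im]
    ring
  have habs2 : ‖b - (β : ℂ) * (starRingEnd ℂ) b‖ ^ 2
      = (D + c * (1 - β) * x) ^ 2 + (c * (1 + β) * y) ^ 2 := by
    rw [Complex.sq_norm, Complex.normSq_apply, hzre, hzim]; ring
  have sqlt : ∀ a d : ℝ, 0 ≤ a → 0 < d → (a < d ↔ a ^ 2 < d ^ 2) := by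
    intro a d ha hd
    constructor <;> intro <;> nlinarith
  have step1 : ‖b - (β : ℂ) * (starRingEnd ℂ) b‖ < D ↔
      (D + c * (1 - β) * x) ^ 2 + (c * (1 + β) * y) ^ 2 < D ^ 2 := by
    rw [← habs2]
    exact sqlt _ _ (norm_nonneg _) hD
  rw [show (1 - β ^ 2 : ℝ) = D from rfl] at *
  set q : ℝ := (1 - β) ^ 2 * x ^ 2 + (1 + β) ^ 2 * y ^ 2 with hqdef
  have hx2 : 0 < x ^ 2 := by nlinarith [hre]
  have hq : 0 < q := by nlinarith [mul_pos (pow_pos h1β 2) hx2, sq_nonneg ((1 + β) * y)]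
  have hden : (1 + β ^ 2) * ‖lam‖ ^ 2 + 2 * β * (y ^ 2 - x ^ 2) = q := by
    rw [Complex.sq_norm, Complex.normSq_apply, hqdef]; ring
  rw [step1, hden]
  have habsx : |x| = -x := abs_of_neg hre
  rw [habsx, lt_div_iff₀ hq]
  have identity : (D + c * (1 - β) * x) ^ 2 + (c * (1 + β) * y) ^ 2 - D ^ 2
      = c * (c * q + 2 * D * (1 - β) * x) := by rw [hqdef]; ring
  clear hzre hzim habs2 step1 hden sqlt hcdef hqdef hbdef hrdef hDdef habsx hβ' hε
  clear_value b
  clear b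
  clear_value x y r c D q
  have hcrq : c * r * q = h * (1 - β) * q := by rw [hcr]
  constructor
  · intro hquad
    have h6 : c * (c * q + 2 * D * (1 - β) * x) < 0 := by linarith [identity]
    have h7 : c * q + 2 * D * (1 - β) * x < 0 := by nlinarith [hc, h6]
    have h8 : (1 - β) * (h * q + 2 * D * x * r) < 0 := by
      linarith [mul_lt_mul_of_pos_right h7 hr, hcrq]
    have h9 : h * q + 2 * D * x * r < 0 := by nlinarith [h8, h1β]
    linarith
  · intro hhq
    have k1 : h * q + 2 * r * D * x < 0 := by linarith
    have k2 : (1 - β) * (h * q + 2 * r * D * x) < 0 := mul_neg_of_pos_of_neg h1β k1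
    have k3 : r * (c * q + 2 * D * (1 - β) * x) < 0 := by linarith [k2, hcrq]
    have h7 : c * q + 2 * D * (1 - β) * x < 0 := by nlinarith [k3, hr]
    have h6 : c * (c * q + 2 * D * (1 - β) * x) < 0 := mul_neg_of_pos_of_neg hc h7
    linarith [identity]
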